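/- If ψ : (0,∞) → (0,∞) is such that ξ/ψ(ξ) is increasing in ξ > 0, then for all ξ > 0, ∫₀^ξ ζ²/ψ(ζ²) dζ ≤ ξ² ∫_ξ^∞ 1/ψ(ζ²) dζ. -/

import Mathlib

open MeasureTheory Set

lemma lintegral_inv_sq_Ioi {ξ : ℝ} (hξ : 0 < ξ) :
    (∫⁻ ζ in Set.Ioi ξ, ENNReal.ofReal (1 / ζ ^ 2)) = ENNReal.ofReal (1 / ξ) := by
  have hcong : (∫⁻ ζ in Set.Ioi ξ, ENNReal.ofReal (1 / ζ ^ 2)) =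
      ∫⁻ ζ in Set.Ioi ξ, ENNReal.ofReal (ζ ^ (-2 : ℝ)) := by
    refine setLIntegral_congr_fun measurableSet_Ioi ?_
    intro ζ hζ
    beta_reduce
    have hζ0 : (0:ℝ) < ζ := hξ.trans hζ
    rw [Real.rpow_neg hζ0.le, Real.rpow_two]
    simp [one_div, sq]
  rw [hcong]
  have hint : IntegrableOn (fun ζ : ℝ => ζ ^ (-2 : ℝ)) (Set.Ioi ξ) :=
    integrableOn_Ioi_rpow_of_lt (by norm_num) hξ
  rw [← ofReal_integral_eq_lintegral_ofReal hint ?_]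
  · rw [integral_Ioi_rpow_of_lt (by norm_num) hξ]
    norm_num
    rw [Real.rpow_neg_one]
  · filter_upwards [ae_restrict_mem measurableSet_Ioi] with ζ hζ
    exact Real.rpow_nonneg (hξ.trans hζ).le _

theorem integral_comparison_incr_ratio (ψ : ℝ → ℝ)
    (hpos : ∀ ξ ∈ Set.Ioi (0:ℝ), 0 < ψ ξ)
    (hmono : MonotoneOn (fun ξ => ξ / ψ ξ) (Set.Ioi 0)) :
    ∀ ξ ∈ Set.Ioi (0:ℝ),
      (∫⁻ ζ in Set.Ioo (0:ℝ) ξ, ENNReal.ofReal (ζ ^ 2 / ψ (ζ ^ 2))) ≤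
        ENNReal.ofReal (ξ ^ 2) *
          ∫⁻ ζ in Set.Ioi ξ, ENNReal.ofReal (1 / ψ (ζ ^ 2)) := by
  intro ξ hξ
  rw [Set.mem_Ioi] at hξ
  set c : ℝ := ξ ^ 2 / ψ (ξ ^ 2) with hc
  have hξ2 : (0:ℝ) < ξ ^ 2 := by positivity
  have hψξ : 0 < ψ (ξ ^ 2) := hpos _ hξ2
  have hc0 : 0 ≤ c := by positivity
  -- upper bound for LHS
  have hL : (∫⁻ ζ in Set.Ioo (0:ℝ) ξ, ENNReal.ofReal (ζ ^ 2 / ψ (ζ ^ 2))) ≤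
      ENNReal.ofReal c * ENNReal.ofReal ξ := by
    calc (∫⁻ ζ in Set.Ioo (0:ℝ) ξ, ENNReal.ofReal (ζ ^ 2 / ψ (ζ ^ 2)))
        ≤ ∫⁻ _ in Set.Ioo (0:ℝ) ξ, ENNReal.ofReal c := by
          refine setLIntegral_mono' measurableSet_Ioo fun ζ hζ => ?_
          refine ENNReal.ofReal_le_ofReal ?_
          have h1 : (0:ℝ) < ζ ^ 2 := pow_pos hζ.1 2
          exact hmono h1 hξ2 (by nlinarith [hζ.1.le, hζ.2.le])
      _ = ENNReal.ofReal c * ENNReal.ofReal ξ := by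
          rw [setLIntegral_const, Real.volume_Ioo]
          norm_num
  -- lower bound for RHS
  have hR : ENNReal.ofReal c * ENNReal.ofReal ξ ≤
      ENNReal.ofReal (ξ ^ 2) * ∫⁻ ζ in Set.Ioi ξ, ENNReal.ofReal (1 / ψ (ζ ^ 2)) := by
    have hmono' : (∫⁻ ζ in Set.Ioi ξ, ENNReal.ofReal (c * (1 / ζ ^ 2))) ≤
        ∫⁻ ζ in Set.Ioi ξ, ENNReal.ofReal (1 / ψ (ζ ^ 2)) := by
      refine setLIntegral_mono' measurableSet_Ioi fun ζ hζ => ?_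
      refine ENNReal.ofReal_le_ofReal ?_
      rw [Set.mem_Ioi] at hζ
      have hζ0 : (0:ℝ) < ζ := hξ.trans hζ
      have hζ2 : (0:ℝ) < ζ ^ 2 := by positivity
      have hψζ : 0 < ψ (ζ ^ 2) := hpos _ hζ2
      have h2 : c ≤ ζ ^ 2 / ψ (ζ ^ 2) :=
        hmono hξ2 hζ2 (by nlinarith)
      have h3 : c * ψ (ζ ^ 2) ≤ ζ ^ 2 := (le_div_iff₀ hψζ).mp h2
      rw [mul_one_div, div_le_div_iff₀ hζ2 hψζ]
      nlinarith
    have hval : (∫⁻ ζ in Set.Ioi ξ, ENNReal.ofReal (c * (1 / ζ ^ 2))) =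
        ENNReal.ofReal c * ENNReal.ofReal (1 / ξ) := by
      have : (∫⁻ ζ in Set.Ioi ξ, ENNReal.ofReal (c * (1 / ζ ^ 2))) =
          ∫⁻ ζ in Set.Ioi ξ, ENNReal.ofReal c * ENNReal.ofReal (1 / ζ ^ 2) := by
        refine setLIntegral_congr_fun measurableSet_Ioi ?_
        intro ζ hζ
        beta_reduce
        rw [ENNReal.ofReal_mul hc0]
      rw [this, lintegral_const_mul' _ _ ENNReal.ofReal_ne_top, lintegral_inv_sq_Ioi hξ]
    calc ENNReal.ofReal c * ENNReal.ofReal ξ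
        = ENNReal.ofReal (ξ ^ 2) * (ENNReal.ofReal c * ENNReal.ofReal (1 / ξ)) := by
          rw [← ENNReal.ofReal_mul hc0, ← ENNReal.ofReal_mul hc0,
            ← ENNReal.ofReal_mul hξ2.le]
          congr 1
          field_simp
      _ = ENNReal.ofReal (ξ ^ 2) * ∫⁻ ζ in Set.Ioi ξ, ENNReal.ofReal (c * (1 / ζ ^ 2)) := by
          rw [hval]
      _ ≤ _ := by exact mul_le_mul_right hmono' _
  exact hL.trans hR
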